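/- Every combinatorial type τ in 𝒞_q with des(τ) = d ≥ 2 and sym(τ) = s has exactly (d−1)/s realizations under the multiplication map m_d, i.e., exactly (d−1)/s period q orbits of m_d realize some cycle in the conjugacy class τ. -/

import Mathlib

open scoped Classical

noncomputable section

/-- The representative of `i : ZMod q` in `{1, …, q}`. -/
def rep (q : ℕ) [NeZero q] (i : ZMod q) : ℕ :=
  if i = 0 then q else i.val

/-- The rotation `ρ : i ↦ i + 1 (mod q)` of `ZMod q`. -/
def rotPerm (q : ℕ) : Equiv.Perm (ZMod q) :=
  Equiv.addRight 1

/-- The descent number `des σ`: the number of `i ∈ ZMod q` with `σ(i) > σ(i+1)`,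
values compared via their representatives in `{1, …, q}`. -/
def desNum (q : ℕ) [NeZero q] (σ : Equiv.Perm (ZMod q)) : ℕ :=
  (Finset.univ.filter fun i : ZMod q => rep q (σ (i + 1)) < rep q (σ i)).card

/-- `σ` is a `q`-cycle, i.e. it acts transitively on `ZMod q`. -/
def IsQCycle (q : ℕ) (σ : Equiv.Perm (ZMod q)) : Prop :=
  ∀ i j : ZMod q, ∃ n : ℕ, (σ ^ n) i = j

/-- The transition matrix of `σ`: the `(i,j)` entry is `1` if `j` lies in the
cyclic interval `[σ(i), σ(i+1))` of `ZMod q` and `0` otherwise. -/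
def transMatrix (q : ℕ) [NeZero q] (σ : Equiv.Perm (ZMod q)) :
    Matrix (ZMod q) (ZMod q) ℝ :=
  Matrix.of fun i j => if (j - σ i).val < (σ (i + 1) - σ i).val then (1 : ℝ) else 0

/-- A probability vector: non-negative components summing to `1`. -/
def IsProbVec (q : ℕ) [NeZero q] (v : ZMod q → ℝ) : Prop :=
  (∀ i, 0 ≤ v i) ∧ ∑ i, v i = 1

/-- The symmetry order of `σ`: the order of the stabilizer of `σ` in the rotation
group `⟨ρ⟩` acting by conjugation. -/
def symOrder (q : ℕ) [NeZero q] (σ : Equiv.Perm (ZMod q)) : ℕ :=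
  ((Finset.range q).filter fun j => rotPerm q ^ j * σ * (rotPerm q ^ j)⁻¹ = σ).card

/-- `F : ℝ → ℝ` is a lift of a degree `k` covering map of `ℝ/ℤ`:
a homeomorphism of `ℝ` with `F (t+1) = F t + k`. -/
def IsDegreeLift (k : ℕ) (F : ℝ → ℝ) : Prop :=
  Continuous F ∧ StrictMono F ∧ ∀ t, F (t + 1) = F t + k

/-- The fixed point of the circle map corresponding to `u` (a point with
`F u - u ∈ ℤ`) is topologically repelling: `t ↦ F t - t` is strictly increasing
in a neighborhood of `u`. -/
def TopRepelling (F : ℝ → ℝ) (u : ℝ) : Prop :=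
  ∃ ε > 0, StrictMonoOn (fun t => F t - t) (Set.Ioo (u - ε) (u + ε))

/-- `x : ZMod q → ℝ` is a period `q` orbit realizing `σ` for the circle map with
lift `F`: the points `x i` lie in `(0,1)` and are increasing with respect to the
representatives `{1, …, q}` (so that `0, x₁, …, x_q` are in positive cyclic
order), and on the circle `f(x i) = x (σ i)` for all `i`. -/
def IsRealization (q : ℕ) [NeZero q] (σ : Equiv.Perm (ZMod q))
    (F : ℝ → ℝ) (x : ZMod q → ℝ) : Prop :=
  (∀ i, x i ∈ Set.Ioo (0 : ℝ) 1) ∧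
  (∀ i j : ZMod q, rep q i < rep q j → x i < x j) ∧
  (∀ i, ∃ m : ℤ, F (x i) = x (σ i) + m)

/-- A realization of `σ` under the multiplication map `m_k : x ↦ kx (mod ℤ)`. -/
def MkRealization (q k : ℕ) [NeZero q] (σ : Equiv.Perm (ZMod q)) (x : ZMod q → ℝ) : Prop :=
  IsRealization q σ (fun t => (k : ℝ) * t) x

/-- The upper endpoint (as a real number) of the partition interval
`I i = [x i, x (i+1)]`; for `i = 0 ≡ q` the interval wraps around `0 ∈ ℝ/ℤ`
and the endpoint is `x 1 + 1`. -/
def upperPt (q : ℕ) [NeZero q] (x : ZMod q → ℝ) (i : ZMod q) : ℝ :=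
  if i = 0 then x 1 + 1 else x (i + 1)

/-- The `i`-th component of the fixed point distribution: the number of fixed
points of `m_k` (the points `j/(k-1) (mod ℤ)`) in the interior of the partition
interval `I i`. -/
def fixDist (q k : ℕ) [NeZero q] (x : ZMod q → ℝ) (i : ZMod q) : ℕ :=
  ((Finset.Icc 1 (2 * (k - 1))).filter fun j : ℕ =>
    x i < (j : ℝ) / ((k : ℝ) - 1) ∧ (j : ℝ) / ((k : ℝ) - 1) < upperPt q x i).card

/-- The number of fixed points of `m_k` in the interval `(0, x 1)`. -/
def countFixBelow (q k : ℕ) [NeZero q] (x : ZMod q → ℝ) : ℕ :=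
  ((Finset.range (k - 1)).filter fun j : ℕ =>
    0 < j ∧ (j : ℝ) / ((k : ℝ) - 1) < x 1).card

/-- The `m`-th component of the (cumulative) deployment vector: the number of
orbit points in `(0, m/(k-1))`. -/
def depCount (q k : ℕ) [NeZero q] (x : ZMod q → ℝ) (m : ℕ) : ℕ :=
  (Finset.univ.filter fun j : ZMod q => x j < (m : ℝ) / ((k : ℝ) - 1)).card

/-- The rank of a marked index `i` among the marked indices `i₁ < ⋯ < i_{d-1}`
(ordered by their representatives in `{1, …, q}`). -/
def markRank (q : ℕ) [NeZero q] (σ : Equiv.Perm (ZMod q)) (i : ZMod q) : ℕ :=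
  (Finset.univ.filter fun i' : ZMod q =>
    transMatrix q σ i' i' = 1 ∧ rep q i' ≤ rep q i).card


section RepLemmas

variable (q : ℕ) [NeZero q]

lemma rep_pos (i : ZMod q) : 1 ≤ rep q i := by
  unfold rep
  split_ifs with h
  · exact Nat.one_le_iff_ne_zero.mpr (NeZero.ne q)
  · exact Nat.one_le_iff_ne_zero.mpr fun hv => h ((ZMod.val_eq_zero i).mp hv)

lemma rep_le (i : ZMod q) : rep q i ≤ q := by
  unfold rep
  split_ifs with h
  · exact le_rfl
  · exact le_of_lt (ZMod.val_lt i)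

lemma rep_lt_of_ne (i : ZMod q) (h : i ≠ 0) : rep q i < q := by
  unfold rep; rw [if_neg h]; exact ZMod.val_lt i

lemma rep_eq_q_iff (i : ZMod q) : rep q i = q ↔ i = 0 := by
  constructor
  · intro h
    by_contra hne
    exact absurd h (Nat.ne_of_lt (rep_lt_of_ne q i hne))
  · intro h; simp [rep, h]

lemma rep_injective : Function.Injective (rep q) := by
  intro a b hab
  by_cases ha : a = 0 <;> by_cases hb : b = 0
  · rw [ha, hb]
  · exfalso; rw [ha] at hab; simp [rep, hb] at hab
    exact absurd hab.symm (Nat.ne_of_lt (ZMod.val_lt b))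
  · exfalso; rw [hb] at hab; simp [rep, ha] at hab
    exact absurd hab (Nat.ne_of_lt (ZMod.val_lt a))
  · simp only [rep, if_neg ha, if_neg hb] at hab
    exact ZMod.val_injective q hab

lemma rep_cast (i : ZMod q) : ((rep q i : ℕ) : ZMod q) = i := by
  unfold rep
  split_ifs with h
  · rw [h, ZMod.natCast_self]
  · exact ZMod.natCast_rightInverse i

lemma rep_add_one (v : ZMod q) (hv : v ≠ 0) : rep q (v + 1) = rep q v + 1 := by
  have hvval : v.val < q := ZMod.val_lt v
  have hv1 : 1 ≤ v.val := Nat.one_le_iff_ne_zero.mpr (by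
    intro h; exact hv ((ZMod.val_eq_zero v).mp h))
  have hcast : ((v.val + 1 : ℕ) : ZMod q) = v + 1 := by
    push_cast [ZMod.natCast_rightInverse v]; ring
  by_cases h1 : v + 1 = 0
  · -- v = -1, v.val + 1 = q
    have hdvd : q ∣ v.val + 1 := by
      rwa [← ZMod.natCast_eq_zero_iff, hcast]
    have : v.val + 1 = q := Nat.le_antisymm hvval (Nat.le_of_dvd (Nat.succ_pos _) hdvd)
    simp [rep, h1, if_neg hv, this]
  · have hlt : v.val + 1 < q := by
      rcases Nat.lt_or_ge (v.val + 1) q with h | h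
      · exact h
      · exfalso
        have : v.val + 1 = q := Nat.le_antisymm hvval h
        apply h1
        rw [← hcast, this, ZMod.natCast_self]
    have : (v + 1 : ZMod q).val = v.val + 1 := by
      rw [← hcast, ZMod.val_cast_of_lt hlt]
    simp [rep, if_neg h1, if_neg hv, this]

end RepLemmas

section KeyIdent
variable (q : ℕ) [NeZero q]

lemma key3 (a b : ZMod q) (hab : a ≠ b) :
    (if rep q b < rep q a then (q : ℤ) else 0) =
      (rep q (b - a) : ℤ) + rep q a - rep q b := by
  have hdvd : (q : ℤ) ∣ ((rep q (b - a) : ℤ) + rep q a - rep q b) := by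
    rw [← ZMod.intCast_zmod_eq_zero_iff_dvd]
    push_cast [rep_cast]
    ring
  have hAB : rep q a ≠ rep q b := fun h => hab (rep_injective q h)
  have hA1 : (1 : ℤ) ≤ (rep q a : ℤ) := by exact_mod_cast rep_pos q a
  have hB1 : (1 : ℤ) ≤ (rep q b : ℤ) := by exact_mod_cast rep_pos q b
  have hC1 : (1 : ℤ) ≤ (rep q (b - a) : ℤ) := by exact_mod_cast rep_pos q (b - a)
  have hAq : (rep q a : ℤ) ≤ q := by exact_mod_cast rep_le q a
  have hBq : (rep q b : ℤ) ≤ q := by exact_mod_cast rep_le q b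
  have hCq : (rep q (b - a) : ℤ) ≤ q := by exact_mod_cast rep_le q (b - a)
  have hq1 : (1 : ℤ) ≤ q := by exact_mod_cast Nat.one_le_iff_ne_zero.mpr (NeZero.ne q)
  obtain ⟨k, hk⟩ := hdvd
  have hk0 : 0 ≤ k := by
    by_contra h
    push_neg at h
    have h' : k ≤ -1 := by omega
    have : (q : ℤ) * k ≤ (q : ℤ) * (-1) := by
      exact mul_le_mul_of_nonneg_left h' (by linarith)
    linarith
  have hk2 : k < 2 := by
    by_contra h
    push_neg at h
    have : (q : ℤ) * 2 ≤ (q : ℤ) * k := by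
      exact mul_le_mul_of_nonneg_left h (by linarith)
    linarith
  interval_cases k
  · rw [if_neg]
    · linarith
    · intro h
      have hz : (rep q b : ℤ) < (rep q a : ℤ) := by exact_mod_cast h
      linarith
  · rw [if_pos]
    · linarith
    · have hz : (rep q a : ℤ) ≠ (rep q b : ℤ) := by exact_mod_cast hAB
      have : (rep q b : ℤ) < (rep q a : ℤ) := by
        rcases lt_trichotomy ((rep q b : ℤ)) ((rep q a : ℤ)) with h | h | h
        · exact h
        · exact absurd h.symm hz
        · linarith
      exact_mod_cast this

lemma sum_shift {M : Type*} [AddCommMonoid M] (f : ZMod q → M) (c : ZMod q) :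
    ∑ i : ZMod q, f (i + c) = ∑ i : ZMod q, f i :=
  Fintype.sum_equiv (Equiv.addRight c) _ _ (fun _ => rfl)

lemma lemA (hq : 2 ≤ q) (τ : Equiv.Perm (ZMod q)) :
    (q : ℤ) * desNum q τ = ∑ i : ZMod q, (rep q (τ (i + 1) - τ i) : ℤ) := by
  haveI : Fact (1 < q) := ⟨hq⟩
  have hne : ∀ i : ZMod q, τ i ≠ τ (i + 1) := by
    intro i h
    have : i = i + 1 := τ.injective h
    simpa using this.symm
  have h1 : (q : ℤ) * desNum q τ =
      ∑ i : ZMod q, (if rep q (τ (i + 1)) < rep q (τ i) then (q : ℤ) else 0) := by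
    rw [desNum, Finset.sum_ite, Finset.sum_const, Finset.sum_const_zero]
    simp [mul_comm]
  rw [h1]
  have h2 : ∀ i : ZMod q,
      (if rep q (τ (i + 1)) < rep q (τ i) then (q : ℤ) else 0) =
      (rep q (τ (i + 1) - τ i) : ℤ) + rep q (τ i) - rep q (τ (i + 1)) :=
    fun i => key3 q _ _ (hne i)
  rw [Finset.sum_congr rfl (fun i _ => h2 i)]
  have h3 : ∑ i : ZMod q, (rep q (τ (i + 1)) : ℤ) = ∑ i : ZMod q, (rep q (τ i) : ℤ) :=
    sum_shift q (fun j => (rep q (τ j) : ℤ)) 1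
  rw [Finset.sum_sub_distrib, Finset.sum_add_distrib, h3]
  ring

lemma lemN (hq : 2 ≤ q) (τ : Equiv.Perm (ZMod q)) (hfix : ∀ i, τ i ≠ i) :
    (q : ℤ) * ((Finset.univ.filter fun i : ZMod q =>
      rep q (τ (i + 1) - i) < rep q (τ i - i)).card : ℤ)
      = (q : ℤ) * desNum q τ - q := by
  haveI : Fact (1 < q) := ⟨hq⟩
  have hne : ∀ i : ZMod q, (τ i - i) ≠ (τ (i + 1) - i) := by
    intro i h
    have h2 : τ i = τ (i + 1) := by
      have := congrArg (· + i) h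
      simpa using this
    have : i = i + 1 := τ.injective h2
    simpa using this.symm
  have h1 : (q : ℤ) * ((Finset.univ.filter fun i : ZMod q =>
      rep q (τ (i + 1) - i) < rep q (τ i - i)).card : ℤ) =
      ∑ i : ZMod q, (if rep q (τ (i + 1) - i) < rep q (τ i - i) then (q : ℤ) else 0) := by
    rw [Finset.sum_ite, Finset.sum_const, Finset.sum_const_zero]
    simp [mul_comm]
  have h2 : ∀ i : ZMod q,
      (if rep q (τ (i + 1) - i) < rep q (τ i - i) then (q : ℤ) else 0) =
      (rep q (τ (i + 1) - τ i) : ℤ) + rep q (τ i - i) - rep q (τ (i + 1) - i) := by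
    intro i
    have h := key3 q (τ i - i) (τ (i + 1) - i) (hne i)
    have harg : τ (i + 1) - i - (τ i - i) = τ (i + 1) - τ i := by ring
    rwa [harg] at h
  rw [h1, Finset.sum_congr rfl (fun i _ => h2 i)]
  have h3 : ∑ i : ZMod q, (rep q (τ (i + 1) - i) : ℤ)
      = ∑ i : ZMod q, (rep q (τ i - i) : ℤ) + q := by
    have e1 : ∑ i : ZMod q, (rep q (τ (i + 1) - i) : ℤ)
        = ∑ i : ZMod q, (rep q (τ i - (i - 1)) : ℤ) := by
      have h := sum_shift q (fun j : ZMod q => (rep q (τ (j + 1) - j) : ℤ)) (-1)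
      rw [← h]
      apply Finset.sum_congr rfl
      intro i _
      ring_nf
    have e2 : ∀ i : ZMod q, (rep q (τ i - (i - 1)) : ℤ) = (rep q (τ i - i) : ℤ) + 1 := by
      intro i
      have harg : τ i - (i - 1) = (τ i - i) + 1 := by ring
      rw [harg]
      exact_mod_cast rep_add_one q (τ i - i) (sub_ne_zero.mpr (hfix i))
    rw [e1, Finset.sum_congr rfl (fun i _ => e2 i), Finset.sum_add_distrib]
    simp [Finset.card_univ]
  rw [Finset.sum_sub_distrib, Finset.sum_add_distrib, h3, lemA q hq τ]
  ring

end KeyIdent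

section CycleFacts
variable {q : ℕ} [NeZero q]

lemma qcycle_no_fix (hq : 2 ≤ q) {π : Equiv.Perm (ZMod q)} (hcyc : IsQCycle q π) :
    ∀ i, π i ≠ i := by
  haveI : Fact (1 < q) := ⟨hq⟩
  intro i hfix
  have hall : ∀ n : ℕ, (π ^ n) i = i := by
    intro n
    induction n with
    | zero => rfl
    | succ n ih => rw [pow_succ, Equiv.Perm.mul_apply, hfix, ih]
  obtain ⟨n, hn⟩ := hcyc i (i + 1)
  rw [hall n] at hn
  simpa using hn.symm

lemma qcycle_pow_q (hq : 2 ≤ q) {π : Equiv.Perm (ZMod q)} (hcyc : IsQCycle q π) :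
    π ^ q = 1 := by
  have hfix := qcycle_no_fix hq hcyc
  have hcyc' : π.IsCycle := by
    refine ⟨0, hfix 0, fun y _ => ?_⟩
    obtain ⟨n, hn⟩ := hcyc 0 y
    exact ⟨(n : ℤ), by rw [zpow_natCast]; exact hn⟩
  have hsupp : π.support = Finset.univ := by
    apply Finset.eq_univ_iff_forall.mpr
    intro i
    exact Equiv.Perm.mem_support.mpr (hfix i)
  have horder : orderOf π = q := by
    rw [hcyc'.orderOf, hsupp, Finset.card_univ, ZMod.card]
  have hpow := pow_orderOf_eq_one π
  rwa [horder] at hpow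

lemma pow_mod_q {π : Equiv.Perm (ZMod q)} (hπq : π ^ q = 1) (n : ℕ) :
    π ^ n = π ^ (n % q) := by
  conv_lhs => rw [← Nat.div_add_mod n q]
  rw [pow_add, pow_mul, hπq, one_pow, one_mul]

lemma exists_pow_lt' (hq : 2 ≤ q) {π : Equiv.Perm (ZMod q)} (hcyc : IsQCycle q π)
    (i j : ZMod q) : ∃ t, t < q ∧ (π ^ t) i = j := by
  obtain ⟨n, hn⟩ := hcyc i j
  refine ⟨n % q, Nat.mod_lt n (by omega), ?_⟩
  rw [← pow_mod_q (qcycle_pow_q hq hcyc) n]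
  exact hn

end CycleFacts

section Digits

def desSet (q : ℕ) [NeZero q] (π : Equiv.Perm (ZMod q)) : Finset (ZMod q) :=
  Finset.univ.filter fun i => rep q (π (i + 1)) < rep q (π i)

lemma desSet_card (q : ℕ) [NeZero q] (π : Equiv.Perm (ZMod q)) :
    (desSet q π).card = desNum q π := rfl

def Mdig (q : ℕ) [NeZero q] (π : Equiv.Perm (ZMod q)) (i : ZMod q) : ℕ :=
  ((desSet q π).filter fun i' => i' ≠ 0 ∧ rep q i' < rep q i).card

def Adig (q d : ℕ) [NeZero q] (π : Equiv.Perm (ZMod q)) (i : ZMod q) : ℕ :=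
  ∑ t ∈ Finset.range q, Mdig q π ((π ^ t) i) * d ^ (q - 1 - t)

def Xfun (q d : ℕ) [NeZero q] (π : Equiv.Perm (ZMod q)) (i : ZMod q) : ℝ :=
  (Adig q d π i : ℝ) / ((d : ℝ) ^ q - 1)

variable {q : ℕ} [NeZero q] {π : Equiv.Perm (ZMod q)}

lemma rep_one (hq : 2 ≤ q) : rep q (1 : ZMod q) = 1 := by
  haveI : Fact (1 < q) := ⟨hq⟩
  rw [rep, if_neg one_ne_zero, ZMod.val_one q]

lemma Mdig_mono {i j : ZMod q} (h : rep q i ≤ rep q j) : Mdig q π i ≤ Mdig q π j := by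
  apply Finset.card_le_card
  apply Finset.monotone_filter_right
  intro i' _ hi'
  exact ⟨hi'.1, lt_of_lt_of_le hi'.2 h⟩

lemma Mdig_one (hq : 2 ≤ q) : Mdig q π 1 = 0 := by
  rw [Mdig, Finset.card_eq_zero, Finset.filter_eq_empty_iff]
  intro i' _
  rw [rep_one hq]
  intro hc
  have := rep_pos q i'
  omega

lemma Mdig_zero (h0 : (0 : ZMod q) ∈ desSet q π) :
    Mdig q π 0 = desNum q π - 1 := by
  have : (desSet q π).filter (fun i' => i' ≠ 0 ∧ rep q i' < rep q 0) =
      (desSet q π).erase 0 := by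
    ext i'
    simp only [Finset.mem_filter, Finset.mem_erase]
    constructor
    · rintro ⟨h1, h2, _⟩; exact ⟨h2, h1⟩
    · rintro ⟨h2, h1⟩
      refine ⟨h1, h2, ?_⟩
      have h3 := rep_lt_of_ne q i' h2
      have h4 : rep q (0 : ZMod q) = q := by simp [rep]
      omega
  rw [Mdig, this, Finset.card_erase_of_mem h0, desSet_card]

lemma Mdig_le (h0 : (0 : ZMod q) ∈ desSet q π) (i : ZMod q) :
    Mdig q π i ≤ desNum q π - 1 := by
  rw [← Mdig_zero h0]
  apply Mdig_mono
  have h4 : rep q (0 : ZMod q) = q := by simp [rep]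
  rw [h4]
  exact rep_le q i

lemma Mdig_succ {i : ZMod q} (hi : i ≠ 0) :
    Mdig q π (i + 1) = Mdig q π i + (if i ∈ desSet q π then 1 else 0) := by
  have hrep : rep q (i + 1) = rep q i + 1 := rep_add_one q i hi
  have hsplit : (desSet q π).filter (fun i' => i' ≠ 0 ∧ rep q i' < rep q (i + 1)) =
      ((desSet q π).filter (fun i' => i' ≠ 0 ∧ rep q i' < rep q i)) ∪
      ((desSet q π).filter (fun i' => i' ≠ 0 ∧ rep q i' = rep q i)) := by
    ext i'
    simp only [Finset.mem_filter, Finset.mem_union, hrep]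
    constructor
    · rintro ⟨h1, h2, h3⟩
      rcases Nat.lt_or_ge (rep q i') (rep q i) with h | h
      · exact Or.inl ⟨h1, h2, h⟩
      · exact Or.inr ⟨h1, h2, by omega⟩
    · rintro (⟨h1, h2, h3⟩ | ⟨h1, h2, h3⟩)
      · exact ⟨h1, h2, by omega⟩
      · exact ⟨h1, h2, by omega⟩
  have hdisj : Disjoint ((desSet q π).filter (fun i' => i' ≠ 0 ∧ rep q i' < rep q i))
      ((desSet q π).filter (fun i' => i' ≠ 0 ∧ rep q i' = rep q i)) := by
    rw [Finset.disjoint_left]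
    intro a ha hb
    simp only [Finset.mem_filter] at ha hb
    omega
  have hsecond : (desSet q π).filter (fun i' => i' ≠ 0 ∧ rep q i' = rep q i) =
      if i ∈ desSet q π then {i} else ∅ := by
    ext i'
    split_ifs with h
    · simp only [Finset.mem_filter, Finset.mem_singleton]
      constructor
      · rintro ⟨_, _, h3⟩; exact rep_injective q h3
      · rintro rfl; exact ⟨h, hi, rfl⟩
    · simp only [Finset.mem_filter, Finset.notMem_empty, iff_false]
      rintro ⟨h1, _, h3⟩
      exact h (rep_injective q h3 ▸ h1)
  rw [Mdig, hsplit, Finset.card_union_of_disjoint hdisj, hsecond]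
  rw [Mdig]
  split_ifs <;> simp

end Digits

section GeomSums

lemma geom_aux (e L : ℕ) : e * (∑ t ∈ Finset.range L, (e + 1) ^ t) + 1 = (e + 1) ^ L := by
  induction L with
  | zero => simp
  | succ L ih =>
    rw [Finset.sum_range_succ, mul_add, pow_succ]
    linear_combination ih

lemma digitSum (d L : ℕ) (hd : 1 ≤ d) :
    ∑ t ∈ Finset.range L, (d - 1) * d ^ (L - 1 - t) = d ^ L - 1 := by
  obtain ⟨e, rfl⟩ : ∃ e, d = e + 1 := ⟨d - 1, by omega⟩
  have h1 : ∑ t ∈ Finset.range L, (e + 1 - 1) * (e + 1) ^ (L - 1 - t)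
      = ∑ t ∈ Finset.range L, e * (e + 1) ^ (L - 1 - t) := by
    apply Finset.sum_congr rfl; intro t _; norm_num
  rw [h1, ← Finset.mul_sum]
  have h2 : ∑ t ∈ Finset.range L, (e + 1) ^ (L - 1 - t)
      = ∑ t ∈ Finset.range L, (e + 1) ^ t := Finset.sum_range_reflect (fun t => (e+1)^t) L
  rw [h2]
  have := geom_aux e L
  omega

lemma splitFirst (n : ℕ) (hn : 0 < n) (g : ℕ → ℕ) :
    ∑ t ∈ Finset.range n, g t = g 0 + ∑ t ∈ Finset.range (n - 1), g (t + 1) := by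
  obtain ⟨m, rfl⟩ : ∃ m, n = m + 1 := ⟨n - 1, by omega⟩
  rw [Finset.sum_range_succ']
  simp [Nat.add_comm]

end GeomSums

section ARec
variable {q d : ℕ} [NeZero q] {π : Equiv.Perm (ZMod q)}

lemma pow_apply_succ (t : ℕ) (i : ZMod q) : (π ^ t) (π i) = (π ^ (t + 1)) i := by
  rw [pow_succ, Equiv.Perm.mul_apply]

lemma pow_apply_succ' (t : ℕ) (i : ZMod q) : π ((π ^ t) i) = (π ^ (t + 1)) i := by
  rw [pow_succ', Equiv.Perm.mul_apply]

lemma aRecNat (hq : 2 ≤ q) (hπq : π ^ q = 1) (i : ZMod q) :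
    d * Adig q d π i + Mdig q π i = Mdig q π i * d ^ q + Adig q d π (π i) := by
  have hq0 : 0 < q := by omega
  set g : ℕ → ℕ := fun t => Mdig q π ((π ^ t) i) * d ^ (q - t) with hg
  have hL : d * Adig q d π i = ∑ t ∈ Finset.range q, g t := by
    rw [Adig, Finset.mul_sum]
    apply Finset.sum_congr rfl
    intro t ht
    rw [Finset.mem_range] at ht
    show d * (Mdig q π ((π ^ t) i) * d ^ (q - 1 - t)) = Mdig q π ((π ^ t) i) * d ^ (q - t)
    have h : q - t = q - 1 - t + 1 := by omega
    rw [h, pow_succ]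
    ring
  have hR : Adig q d π (π i) = ∑ t ∈ Finset.range q, g (t + 1) := by
    rw [Adig]
    apply Finset.sum_congr rfl
    intro t ht
    rw [Finset.mem_range] at ht
    show Mdig q π ((π ^ t) (π i)) * d ^ (q - 1 - t) = Mdig q π ((π ^ (t+1)) i) * d ^ (q - (t + 1))
    rw [pow_apply_succ]
    have h : q - (t + 1) = q - 1 - t := by omega
    rw [h]
  have hkey : ∑ t ∈ Finset.range q, g t + g q = g 0 + ∑ t ∈ Finset.range q, g (t + 1) := by
    rw [← Finset.sum_range_succ, Finset.sum_range_succ']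
    omega
  have hgq : g q = Mdig q π i := by
    rw [hg]
    simp [hπq]
  have hg0 : g 0 = Mdig q π i * d ^ q := by rw [hg]; simp
  rw [hL, hR]
  omega

lemma Adig_lower (hq : 2 ≤ q) (i : ZMod q) :
    Mdig q π i * d ^ (q - 1) ≤ Adig q d π i := by
  have h0 : (0 : ℕ) ∈ Finset.range q := by simp; omega
  have := Finset.single_le_sum (f := fun t => Mdig q π ((π ^ t) i) * d ^ (q - 1 - t))
    (fun t _ => Nat.zero_le _) h0
  simpa [Adig] using this

lemma Adig_upper (hq : 2 ≤ q) (hd2 : 2 ≤ d) (hM : ∀ j, Mdig q π j ≤ d - 1) (i : ZMod q) :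
    Adig q d π i < (Mdig q π i + 1) * d ^ (q - 1) := by
  have hq0 : 0 < q := by omega
  have hsplit := splitFirst q hq0 (fun t => Mdig q π ((π ^ t) i) * d ^ (q - 1 - t))
  have htail : ∑ t ∈ Finset.range (q - 1), Mdig q π ((π ^ (t+1)) i) * d ^ (q - 1 - (t + 1))
      ≤ d ^ (q - 1) - 1 := by
    calc ∑ t ∈ Finset.range (q - 1), Mdig q π ((π ^ (t+1)) i) * d ^ (q - 1 - (t + 1))
        ≤ ∑ t ∈ Finset.range (q - 1), (d - 1) * d ^ ((q - 1) - 1 - t) := by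
          apply Finset.sum_le_sum
          intro t ht
          have : q - 1 - (t + 1) = (q - 1) - 1 - t := by omega
          rw [this]
          exact Nat.mul_le_mul_right _ (hM _)
      _ = d ^ (q - 1) - 1 := digitSum d (q - 1) (by omega)
  have hfirst : Mdig q π ((π ^ 0) i) * d ^ (q - 1 - 0) = Mdig q π i * d ^ (q - 1) := by simp
  have hpow : 1 ≤ d ^ (q - 1) := Nat.one_le_pow _ _ (by omega)
  have : Adig q d π i ≤ Mdig q π i * d ^ (q - 1) + (d ^ (q - 1) - 1) := by
    rw [Adig, hsplit, hfirst]
    omega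
  have hmul : (Mdig q π i + 1) * d ^ (q - 1) = Mdig q π i * d ^ (q - 1) + d ^ (q - 1) := by
    ring
  omega

lemma Adig_pos (hq : 2 ≤ q) (hd2 : 2 ≤ d) (hcyc : IsQCycle q π)
    (h0 : (0 : ZMod q) ∈ desSet q π) (hdes2 : 2 ≤ desNum q π) (i : ZMod q) :
    0 < Adig q d π i := by
  obtain ⟨t, ht, hti⟩ := exists_pow_lt' hq hcyc i 0
  have hM0 : 0 < Mdig q π ((π ^ t) i) := by
    rw [hti, Mdig_zero h0]
    omega
  have hterm : 0 < Mdig q π ((π ^ t) i) * d ^ (q - 1 - t) :=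
    Nat.mul_pos hM0 (Nat.pow_pos (by omega))
  calc 0 < Mdig q π ((π ^ t) i) * d ^ (q - 1 - t) := hterm
    _ ≤ Adig q d π i := Finset.single_le_sum (f := fun t => Mdig q π ((π ^ t) i) * d ^ (q - 1 - t))
        (fun _ _ => Nat.zero_le _) (Finset.mem_range.mpr ht)

lemma Adig_top (hq : 2 ≤ q) (hd2 : 2 ≤ d) (hcyc : IsQCycle q π)
    (hM : ∀ j, Mdig q π j ≤ d - 1) (i : ZMod q) :
    Adig q d π i < d ^ q - 1 := by
  obtain ⟨t, ht, hti⟩ := exists_pow_lt' hq hcyc i 1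
  have hlt : Adig q d π i < ∑ t ∈ Finset.range q, (d - 1) * d ^ (q - 1 - t) := by
    rw [Adig]
    apply Finset.sum_lt_sum
    · intro t' _
      exact Nat.mul_le_mul_right _ (hM _)
    · refine ⟨t, Finset.mem_range.mpr ht, ?_⟩
      rw [hti, Mdig_one hq]
      have : 0 < (d - 1) * d ^ (q - 1 - t) :=
        Nat.mul_pos (by omega) (Nat.pow_pos (by omega))
      omega
  rwa [digitSum d q (by omega)] at hlt

end ARec

section Mono
variable {q d : ℕ} [NeZero q] {π : Equiv.Perm (ZMod q)}

lemma rep_zero : rep q (0 : ZMod q) = q := by simp [rep]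

lemma ascent_step (hq : 2 ≤ q) {i : ZMod q} (hi : i ≠ 0) (hnd : i ∉ desSet q π) :
    rep q (π i) < rep q (π (i + 1)) := by
  haveI : Fact (1 < q) := ⟨hq⟩
  have hne : π i ≠ π (i + 1) := by
    intro h
    have : i = i + 1 := π.injective h
    simpa using this.symm
  have hne' : rep q (π i) ≠ rep q (π (i + 1)) := fun h => hne (rep_injective q h)
  have hnotlt : ¬ rep q (π (i + 1)) < rep q (π i) := by
    intro h
    exact hnd (Finset.mem_filter.mpr ⟨Finset.mem_univ _, h⟩)
  omega

lemma stepMono (hq : 2 ≤ q) :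
    ∀ k, ∀ i j : ZMod q, rep q j = rep q i + (k + 1) → Mdig q π i = Mdig q π j →
      rep q (π i) < rep q (π j) := by
  haveI : Fact (1 < q) := ⟨hq⟩
  intro k
  induction k with
  | zero =>
    intro i j hrep hM
    have hjq : rep q j ≤ q := rep_le q j
    have hine : i ≠ 0 := by
      intro h
      rw [h, rep_zero] at hrep
      omega
    have hj : j = i + 1 := by
      apply rep_injective q
      rw [rep_add_one q i hine, hrep]
    have hnd : i ∉ desSet q π := by
      intro hd
      have := Mdig_succ (π := π) hine
      rw [if_pos hd] at this
      rw [← hj] at this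
      omega
    rw [hj]
    exact ascent_step hq hine hnd
  | succ k ih =>
    intro i j hrep hM
    have hjq : rep q j ≤ q := rep_le q j
    have hiq : 1 ≤ rep q i := rep_pos q i
    have hj1 : j ≠ 1 := by
      intro h
      rw [h, rep_one hq] at hrep
      omega
    have hjm : j - 1 ≠ 0 := by
      intro h
      apply hj1
      have := congrArg (· + 1) h
      simpa using this
    have hjrep : rep q j = rep q (j - 1) + 1 := by
      have h := rep_add_one q (j - 1) hjm
      simp only [sub_add_cancel] at h
      omega
    have hrepm : rep q (j - 1) = rep q i + (k + 1) := by omega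
    have hMm : Mdig q π i = Mdig q π (j - 1) := by
      have h1 : Mdig q π i ≤ Mdig q π (j - 1) := Mdig_mono (by omega)
      have h2 : Mdig q π (j - 1) ≤ Mdig q π j := Mdig_mono (by omega)
      omega
    have hstep1 : rep q (π i) < rep q (π (j - 1)) := ih i (j - 1) hrepm hMm
    have hnd : (j - 1) ∉ desSet q π := by
      intro hd
      have hM2 := Mdig_succ (π := π) hjm
      rw [if_pos hd] at hM2
      simp only [sub_add_cancel] at hM2
      omega
    have hstep2 : rep q (π (j - 1)) < rep q (π ((j - 1) + 1)) := ascent_step hq hjm hnd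
    simp only [sub_add_cancel] at hstep2
    omega

lemma asMono (hq : 2 ≤ q) (hd2 : 2 ≤ d) (hπq : π ^ q = 1)
    (hM : ∀ j, Mdig q π j ≤ d - 1) :
    ∀ n, ∀ i j : ZMod q, (π ^ n) i = 0 → rep q i < rep q j →
      Adig q d π i < Adig q d π j := by
  intro n
  induction n with
  | zero =>
    intro i j h0 hij
    simp only [pow_zero, Equiv.Perm.one_apply] at h0
    rw [h0, rep_zero] at hij
    have := rep_le q j
    omega
  | succ n ih =>
    intro i j h0 hij
    have hMle : Mdig q π i ≤ Mdig q π j := Mdig_mono (le_of_lt hij)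
    rcases Nat.lt_or_ge (Mdig q π i) (Mdig q π j) with hlt | hge
    · calc Adig q d π i < (Mdig q π i + 1) * d ^ (q - 1) := Adig_upper hq hd2 hM i
        _ ≤ Mdig q π j * d ^ (q - 1) := Nat.mul_le_mul_right _ (by omega)
        _ ≤ Adig q d π j := Adig_lower hq j
    · have hMeq : Mdig q π i = Mdig q π j := by omega
      obtain ⟨k, hk⟩ : ∃ k, rep q j = rep q i + (k + 1) := ⟨rep q j - rep q i - 1, by omega⟩
      have hstep : rep q (π i) < rep q (π j) := stepMono hq k i j hk hMeq
      have h0' : (π ^ n) (π i) = 0 := by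
        rw [pow_apply_succ]
        exact h0
      have hA := ih (π i) (π j) h0' hstep
      have hrec1 := aRecNat (d := d) hq hπq i
      have hrec2 := aRecNat (d := d) hq hπq j
      have hdlt : d * Adig q d π i < d * Adig q d π j := by
        rw [hMeq] at hrec1
        omega
      exact Nat.lt_of_mul_lt_mul_left hdlt

end Mono

section Exists
variable {q d : ℕ} [NeZero q] {π : Equiv.Perm (ZMod q)}

lemma Xreal (hq : 2 ≤ q) (hd2 : 2 ≤ d) (hcyc : IsQCycle q π)
    (hdes : desNum q π = d) (h0 : (0 : ZMod q) ∈ desSet q π) :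
    MkRealization q d π (Xfun q d π) := by
  have hπq : π ^ q = 1 := qcycle_pow_q hq hcyc
  have hM : ∀ j, Mdig q π j ≤ d - 1 := fun j => hdes ▸ Mdig_le h0 j
  have hdq : (2 : ℕ) ≤ d ^ q := le_trans hd2 (Nat.le_self_pow (by omega) d)
  have hD : (0 : ℝ) < (d : ℝ) ^ q - 1 := by
    have : (2 : ℝ) ≤ (d : ℝ) ^ q := by exact_mod_cast hdq
    linarith
  have hDnat : ((d ^ q - 1 : ℕ) : ℝ) = (d : ℝ) ^ q - 1 := by
    push_cast [Nat.cast_sub (by omega : 1 ≤ d ^ q)]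
    ring
  refine ⟨?_, ?_, ?_⟩
  · intro i
    constructor
    · apply div_pos _ hD
      exact_mod_cast Adig_pos hq hd2 hcyc h0 (by omega) i
    · show Xfun q d π i < 1
      rw [Xfun, div_lt_one hD]
      have h1 := Adig_top (d := d) hq hd2 hcyc hM i
      have h2 : (Adig q d π i : ℝ) < ((d ^ q - 1 : ℕ) : ℝ) := by exact_mod_cast h1
      rwa [hDnat] at h2
  · intro i j hij
    obtain ⟨n, hn⟩ := hcyc i 0
    have hA := asMono (d := d) hq hd2 hπq hM n i j hn hij
    show Xfun q d π i < Xfun q d π j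
    rw [Xfun, Xfun]
    apply div_lt_div_of_pos_right _ hD
    exact_mod_cast hA
  · intro i
    refine ⟨(Mdig q π i : ℤ), ?_⟩
    have hrec := aRecNat (d := d) hq hπq i
    have hrecR : (d : ℝ) * Adig q d π i + Mdig q π i
        = Mdig q π i * (d : ℝ) ^ q + Adig q d π (π i) := by exact_mod_cast hrec
    show (d : ℝ) * Xfun q d π i = Xfun q d π (π i) + (Mdig q π i : ℤ)
    rw [Xfun, Xfun]
    field_simp
    push_cast
    linarith

end Exists

section Uniq
variable {q d : ℕ} [NeZero q] {π : Equiv.Perm (ZMod q)}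

lemma x_lt_iff {x : ZMod q → ℝ} (hmono : ∀ i j : ZMod q, rep q i < rep q j → x i < x j)
    (a b : ZMod q) : x a < x b ↔ rep q a < rep q b := by
  constructor
  · intro h
    rcases Nat.lt_trichotomy (rep q a) (rep q b) with h' | h' | h'
    · exact h'
    · exact absurd (rep_injective q h' ▸ rfl : x a = x b) (ne_of_lt h)
    · exact absurd (hmono b a h') (by linarith)
  · exact hmono a b

lemma x_inj {x : ZMod q → ℝ} (hmono : ∀ i j : ZMod q, rep q i < rep q j → x i < x j) :
    Function.Injective x := by
  intro a b hab
  by_contra hne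
  have : rep q a ≠ rep q b := fun h => hne (rep_injective q h)
  rcases Nat.lt_or_ge (rep q a) (rep q b) with h | h
  · exact absurd (hmono a b h) (by rw [hab]; exact lt_irrefl _)
  · exact absurd (hmono b a (by omega)) (by rw [hab]; exact lt_irrefl _)

lemma Xuniq (hq : 2 ≤ q) (hd2 : 2 ≤ d) (hcyc : IsQCycle q π)
    (hdes : desNum q π = d) {x : ZMod q → ℝ} (hx : MkRealization q d π x) :
    (0 : ZMod q) ∈ desSet q π ∧ x = Xfun q d π := by
  haveI : Fact (1 < q) := ⟨hq⟩
  obtain ⟨hmem, hmono, heq⟩ := hx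
  choose m hm0 using heq
  have hm : ∀ i, (d : ℝ) * x i = x (π i) + m i := hm0
  have hπq : π ^ q = 1 := qcycle_pow_q hq hcyc
  have hd0 : (0 : ℝ) < d := by positivity
  have hd2' : (2 : ℝ) ≤ (d : ℝ) := by exact_mod_cast hd2
  have hx0 : ∀ i, 0 < x i := fun i => (hmem i).1
  have hx1 : ∀ i, x i < 1 := fun i => (hmem i).2
  have hmb : ∀ i, 0 ≤ m i ∧ m i ≤ (d : ℤ) - 1 := by
    intro i
    have h1 : ((m i : ℤ) : ℝ) = d * x i - x (π i) := by rw [hm i]; ring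
    have h2 : (-1 : ℝ) < ((m i : ℤ) : ℝ) := by
      rw [h1]
      nlinarith [hx0 i, hx1 (π i)]
    have h3 : ((m i : ℤ) : ℝ) < d := by
      rw [h1]
      nlinarith [hx1 i, hx0 (π i)]
    constructor
    · exact_mod_cast by exact_mod_cast Int.lt_iff_add_one_le.mp (show (-1 : ℤ) < m i by exact_mod_cast h2)
    · have : (m i : ℤ) < d := by exact_mod_cast h3
      omega
  set w : ZMod q → ℤ := fun i => m (i + 1) - m i + (if i = 0 then (d : ℤ) else 0) with hwdef
  set gap : ZMod q → ℝ := fun i => x (i + 1) + (if i = 0 then (1 : ℝ) else 0) - x i with hgapdef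
  have hwid : ∀ i, (w i : ℝ) = d * gap i - (x (π (i + 1)) - x (π i)) := by
    intro i
    have h1 := hm i
    have h2 := hm (i + 1)
    simp only [hwdef, hgapdef]
    push_cast
    split_ifs <;> linarith [h1, h2]
  have hgappos : ∀ i, 0 < gap i := by
    intro i
    simp only [hgapdef]
    split_ifs with h
    · subst h
      linarith [hx0 ((0 : ZMod q) + 1), hx1 (0 : ZMod q)]
    · have : rep q i < rep q (i + 1) := by rw [rep_add_one q i h]; omega
      have := hmono i (i + 1) this
      linarith
  have hw0 : ∀ i, 0 ≤ w i := by
    intro i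
    have h1 := hwid i
    have h2 := hgappos i
    have h3 : x (π (i + 1)) - x (π i) < 1 := by
      have := hx1 (π (i + 1)); have := hx0 (π i); linarith
    have : (-1 : ℝ) < (w i : ℝ) := by nlinarith
    have : (-1 : ℤ) < w i := by exact_mod_cast this
    omega
  have hwdes : ∀ i ∈ desSet q π, 1 ≤ w i := by
    intro i hi
    rw [desSet, Finset.mem_filter] at hi
    have hlt : x (π (i + 1)) < x (π i) := hmono _ _ hi.2
    have h1 := hwid i
    have h2 := hgappos i
    have : (0 : ℝ) < (w i : ℝ) := by nlinarith
    have : (0 : ℤ) < w i := by exact_mod_cast this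
    omega
  have hsum : ∑ i : ZMod q, w i = d := by
    simp only [hwdef]
    rw [Finset.sum_add_distrib, Finset.sum_sub_distrib]
    have h1 : ∑ i : ZMod q, m (i + 1) = ∑ i : ZMod q, m i := sum_shift q m 1
    rw [h1, Finset.sum_ite_eq' Finset.univ (0 : ZMod q) (fun _ => (d : ℤ))]
    simp
  have hfilter : Finset.univ.filter (fun i => i ∈ desSet q π) = desSet q π := by
    ext i; simp [desSet]
  have hsplit : ∑ i ∈ desSet q π, w i + ∑ i ∈ Finset.univ.filter (fun i => i ∉ desSet q π), w i
      = (d : ℤ) := by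
    have h := Finset.sum_filter_add_sum_filter_not Finset.univ (fun i => i ∈ desSet q π) w
    rw [hfilter] at h
    rw [h, hsum]
  have hcard : (desSet q π).card = d := by rw [desSet_card, hdes]
  have hlow : (d : ℤ) ≤ ∑ i ∈ desSet q π, w i := by
    calc (d : ℤ) = ∑ _i ∈ desSet q π, (1 : ℤ) := by
          rw [Finset.sum_const, hcard]; simp
      _ ≤ ∑ i ∈ desSet q π, w i := Finset.sum_le_sum hwdes
  have hnotsum : ∑ i ∈ Finset.univ.filter (fun i => i ∉ desSet q π), w i = 0 := by
    have hge : 0 ≤ ∑ i ∈ Finset.univ.filter (fun i => i ∉ desSet q π), w i :=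
      Finset.sum_nonneg (fun i _ => hw0 i)
    omega
  have hwnot : ∀ i, i ∉ desSet q π → w i = 0 := by
    intro i hi
    have := (Finset.sum_eq_zero_iff_of_nonneg (fun j _ => hw0 j)).mp hnotsum i
      (by simp [hi])
    exact this
  have hdessum : ∑ i ∈ desSet q π, w i = d := by omega
  have hwone : ∀ i ∈ desSet q π, w i = 1 := by
    have hz : ∑ i ∈ desSet q π, (w i - 1) = 0 := by
      rw [Finset.sum_sub_distrib, hdessum, Finset.sum_const, hcard]
      simp
    intro i hi
    have := (Finset.sum_eq_zero_iff_of_nonneg (fun j hj => by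
      have := hwdes j hj; omega)).mp hz i hi
    omega
  have hw : ∀ i, w i = if i ∈ desSet q π then 1 else 0 := by
    intro i
    by_cases h : i ∈ desSet q π
    · rw [if_pos h]; exact hwone i h
    · rw [if_neg h]; exact hwnot i h
  have h0des : (0 : ZMod q) ∈ desSet q π := by
    by_contra h
    have h1 := hwnot 0 h
    have h2 : w 0 = m (0 + 1) - m 0 + d := by simp [hwdef]
    have := (hmb (0 + 1)).1
    have := (hmb 0).2
    rw [zero_add] at *
    omega
  have hw0val : w 0 = 1 := hwone 0 h0des
  have hm1 : m 1 = 0 := by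
    have h2 : w 0 = m (0 + 1) - m 0 + d := by simp [hwdef]
    have := (hmb 1).1
    have := (hmb 0).2
    rw [zero_add] at h2
    omega
  -- m agrees with Mdig
  have hclaim : ∀ n : ℕ, ∀ i : ZMod q, rep q i = n + 1 → m i = (Mdig q π i : ℤ) := by
    intro n
    induction n with
    | zero =>
      intro i hi
      have : i = 1 := rep_injective q (by rw [hi, rep_one hq])
      rw [this, hm1, Mdig_one hq]
      simp
    | succ n ih =>
      intro i hi
      have hi1 : i ≠ 1 := by
        intro h
        rw [h, rep_one hq] at hi
        omega
      have him : i - 1 ≠ 0 := by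
        intro h
        apply hi1
        have := congrArg (· + 1) h
        simpa using this
      have hrepm : rep q (i - 1) + 1 = rep q i := by
        have := rep_add_one q (i - 1) him
        simpa using this.symm
      have hrepm' : rep q (i - 1) = n + 1 := by omega
      have hIH := ih (i - 1) hrepm'
      have hwim : w (i - 1) = m i - m (i - 1) := by
        simp only [hwdef, if_neg him]
        simp
      have hMs := Mdig_succ (π := π) him
      simp only [sub_add_cancel] at hMs
      have hwval := hw (i - 1)
      rw [hwim] at hwval
      rw [hMs]
      push_cast
      split_ifs at hwval with hd' <;> [rw [if_pos hd']; rw [if_neg hd']] <;> omega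
  have hmM : ∀ i, m i = (Mdig q π i : ℤ) := by
    intro i
    have h1 := rep_pos q i
    exact hclaim (rep q i - 1) i (by omega)
  -- iterate to identify x with Xfun
  constructor
  · exact h0des
  · funext i
    have hiter : ∀ n : ℕ, (d : ℝ) ^ n * x i =
        x ((π ^ n) i) + ∑ t ∈ Finset.range n, (Mdig q π ((π ^ t) i) : ℝ) * (d : ℝ) ^ (n - 1 - t) := by
      intro n
      induction n with
      | zero => simp
      | succ n ihn =>
        have hstep : (d : ℝ) * x ((π ^ n) i) = x ((π ^ (n + 1)) i) + (Mdig q π ((π ^ n) i) : ℝ) := by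
          have h := hm ((π ^ n) i)
          rw [hmM ((π ^ n) i)] at h
          rw [pow_apply_succ'] at h
          exact_mod_cast h
        have : (d : ℝ) ^ (n + 1) * x i = d * ((d : ℝ) ^ n * x i) := by ring
        rw [this, ihn, mul_add, hstep, Finset.mul_sum]
        rw [Finset.sum_range_succ]
        have hterm : ∀ t ∈ Finset.range n,
            (d : ℝ) * ((Mdig q π ((π ^ t) i) : ℝ) * (d : ℝ) ^ (n - 1 - t))
            = (Mdig q π ((π ^ t) i) : ℝ) * (d : ℝ) ^ (n + 1 - 1 - t) := by
          intro t ht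
          rw [Finset.mem_range] at ht
          have : n + 1 - 1 - t = (n - 1 - t) + 1 := by omega
          rw [this, pow_succ]
          ring
        rw [Finset.sum_congr rfl hterm]
        have : n + 1 - 1 - n = 0 := by omega
        rw [this]
        push_cast
        ring
    have hq' := hiter q
    rw [hπq] at hq'
    simp only [Equiv.Perm.one_apply] at hq'
    have hAcast : ((Adig q d π i : ℕ) : ℝ)
        = ∑ t ∈ Finset.range q, (Mdig q π ((π ^ t) i) : ℝ) * (d : ℝ) ^ (q - 1 - t) := by
      rw [Adig]
      push_cast
      rfl
    have hdq : (2 : ℕ) ≤ d ^ q := le_trans hd2 (Nat.le_self_pow (by omega) d)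
    have hD : (0 : ℝ) < (d : ℝ) ^ q - 1 := by
      have : (2 : ℝ) ≤ (d : ℝ) ^ q := by exact_mod_cast hdq
      linarith
    rw [Xfun, eq_div_iff (by linarith)]
    rw [hAcast]
    linarith
  
lemma real_perm_unique (hq : 2 ≤ q) {π π' : Equiv.Perm (ZMod q)} {x : ZMod q → ℝ}
    (hx : MkRealization q d π x) (hx' : MkRealization q d π' x) : π = π' := by
  obtain ⟨hmem, hmono, heq⟩ := hx
  obtain ⟨_, _, heq'⟩ := hx'
  apply Equiv.ext
  intro i
  obtain ⟨a, ha⟩ := heq i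
  obtain ⟨b, hb⟩ := heq' i
  have hdiff : x (π i) - x (π' i) = (b : ℝ) - a := by
    rw [ha] at hb
    linarith
  have h1 : (-1 : ℝ) < x (π i) - x (π' i) := by
    have := (hmem (π i)).1; have := (hmem (π' i)).2; linarith
  have h2 : x (π i) - x (π' i) < 1 := by
    have := (hmem (π i)).2; have := (hmem (π' i)).1; linarith
  have hab : a = b := by
    have h3 : (-1 : ℝ) < (b : ℝ) - a := by linarith
    have h4 : ((b : ℝ)) - a < 1 := by linarith
    have h5 : (-1 : ℤ) < b - a := by exact_mod_cast h3
    have h6 : (b : ℤ) - a < 1 := by exact_mod_cast h4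
    omega
  have : x (π i) = x (π' i) := by rw [hab] at hdiff; linarith
  exact x_inj hmono this

end Uniq

section Conj
variable {q : ℕ} [NeZero q]

def Rq (q : ℕ) (a : ZMod q) : Equiv.Perm (ZMod q) := Equiv.addRight a

lemma Rq_hom (a b : ZMod q) : Rq q (a + b) = Rq q a * Rq q b := by
  apply Equiv.ext
  intro x
  simp [Rq, Equiv.Perm.mul_apply]
  ring

def PhiC (q : ℕ) (σ : Equiv.Perm (ZMod q)) (a : ZMod q) : Equiv.Perm (ZMod q) :=
  Rq q a * σ * (Rq q a)⁻¹

lemma PhiC_apply (σ : Equiv.Perm (ZMod q)) (a i : ZMod q) :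
    PhiC q σ a i = σ (i - a) + a := by
  simp [PhiC, Rq, Equiv.Perm.mul_apply, Equiv.Perm.inv_def, sub_eq_add_neg]

lemma PhiC_conj (σ : Equiv.Perm (ZMod q)) (a b : ZMod q) :
    PhiC q σ a = MulAut.conj (Rq q b) (PhiC q σ (a - b)) := by
  have h : Rq q a = Rq q b * Rq q (a - b) := by
    rw [← Rq_hom]
    congr 1
    ring
  rw [MulAut.conj_apply, PhiC, PhiC, h, mul_inv_rev]
  group

lemma PhiC_eq_iff (σ : Equiv.Perm (ZMod q)) (a b : ZMod q) :
    PhiC q σ a = PhiC q σ b ↔ PhiC q σ (a - b) = σ := by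
  have hb : PhiC q σ b = MulAut.conj (Rq q b) σ := rfl
  rw [PhiC_conj σ a b, hb]
  exact (MulAut.conj (Rq q b)).injective.eq_iff

lemma rot_pow (j : ℕ) : rotPerm q ^ j = Rq q ((j : ℕ) : ZMod q) := by
  induction j with
  | zero =>
    apply Equiv.ext
    intro x
    simp [Rq]
  | succ j ih =>
    rw [pow_succ, ih]
    apply Equiv.ext
    intro x
    simp [Rq, rotPerm, Equiv.Perm.mul_apply]
    push_cast
    ring

lemma conj_bridge (σ : Equiv.Perm (ZMod q)) (j : ℕ) :
    rotPerm q ^ j * σ * (rotPerm q ^ j)⁻¹ = PhiC q σ ((j : ℕ) : ZMod q) := by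
  rw [rot_pow, PhiC]

lemma PhiC_pow (σ : Equiv.Perm (ZMod q)) (a : ZMod q) (n : ℕ) (i : ZMod q) :
    ((PhiC q σ a) ^ n) i = (σ ^ n) (i - a) + a := by
  induction n with
  | zero => simp
  | succ n ih =>
    rw [← pow_apply_succ' n i, ih, PhiC_apply, add_sub_cancel_right, pow_apply_succ']

lemma PhiC_qcycle {σ : Equiv.Perm (ZMod q)} (hcyc : IsQCycle q σ) (a : ZMod q) :
    IsQCycle q (PhiC q σ a) := by
  intro i j
  obtain ⟨n, hn⟩ := hcyc (i - a) (j - a)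
  refine ⟨n, ?_⟩
  rw [PhiC_pow, hn]
  ring

lemma PhiC_des (hq : 2 ≤ q) (σ : Equiv.Perm (ZMod q)) (a : ZMod q) :
    desNum q (PhiC q σ a) = desNum q σ := by
  have h1 := lemA q hq (PhiC q σ a)
  have h2 := lemA q hq σ
  have h3 : ∑ i : ZMod q, (rep q (PhiC q σ a (i + 1) - PhiC q σ a i) : ℤ)
      = ∑ i : ZMod q, (rep q (σ (i + 1) - σ i) : ℤ) := by
    have e1 : ∀ i : ZMod q, (rep q (PhiC q σ a (i + 1) - PhiC q σ a i) : ℤ)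
        = (rep q (σ ((i - a) + 1) - σ (i - a)) : ℤ) := by
      intro i
      have h4 : i + 1 - a = (i - a) + 1 := by ring
      rw [PhiC_apply, PhiC_apply, h4, add_sub_add_right_eq_sub]
    rw [Finset.sum_congr rfl (fun i _ => e1 i)]
    have hss := sum_shift q (fun j : ZMod q => (rep q (σ (j + 1) - σ j) : ℤ)) (-a)
    rw [← hss]
    apply Finset.sum_congr rfl
    intro i _
    rw [← sub_eq_add_neg]
  have hq0 : (q : ℤ) ≠ 0 := by
    have : 0 < q := by omega
    exact_mod_cast Nat.pos_iff_ne_zero.mp this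
  have : (q : ℤ) * desNum q (PhiC q σ a) = (q : ℤ) * desNum q σ := by
    rw [h1, h2, h3]
  have := mul_left_cancel₀ hq0 this
  exact_mod_cast this

lemma Ncount (hq : 2 ≤ q) {σ : Equiv.Perm (ZMod q)} (hcyc : IsQCycle q σ)
    (hdes1 : 1 ≤ desNum q σ) :
    (Finset.univ.filter fun a : ZMod q =>
      (0 : ZMod q) ∈ desSet q (PhiC q σ a)).card = desNum q σ - 1 := by
  have hfix : ∀ i, σ i ≠ i := qcycle_no_fix hq hcyc
  have hcond : ∀ a : ZMod q, ((0 : ZMod q) ∈ desSet q (PhiC q σ a) ↔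
      rep q (σ (1 - a) + a) < rep q (σ (-a) + a)) := by
    intro a
    have h01 : PhiC q σ a (0 + 1) = σ (1 - a) + a := by rw [zero_add, PhiC_apply]
    have h00 : PhiC q σ a 0 = σ (-a) + a := by rw [PhiC_apply, zero_sub]
    rw [desSet, Finset.mem_filter, h01, h00]
    simp
  have hbij : (Finset.univ.filter fun a : ZMod q =>
      (0 : ZMod q) ∈ desSet q (PhiC q σ a)).card =
      (Finset.univ.filter fun i : ZMod q =>
        rep q (σ (i + 1) - i) < rep q (σ i - i)).card := by
    apply Finset.card_bij (fun a _ => -a)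
    · intro a ha
      rw [Finset.mem_filter] at ha ⊢
      refine ⟨Finset.mem_univ _, ?_⟩
      have h := (hcond a).mp ha.2
      have e1 : -a + 1 = 1 - a := by ring
      rw [e1, sub_neg_eq_add, sub_neg_eq_add]
      exact h
    · intro a _ b _ h
      exact neg_injective h
    · intro i hi
      refine ⟨-i, ?_, neg_neg i⟩
      rw [Finset.mem_filter] at hi ⊢
      refine ⟨Finset.mem_univ _, ?_⟩
      apply (hcond (-i)).mpr
      have e1 : (1 : ZMod q) - -i = i + 1 := by ring
      rw [e1, neg_neg, ← sub_eq_add_neg, ← sub_eq_add_neg]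
      exact hi.2
  rw [hbij]
  have hN := lemN q hq σ hfix
  have hq0 : (q : ℤ) ≠ 0 := by
    have : 0 < q := by omega
    exact_mod_cast Nat.pos_iff_ne_zero.mp this
  have : (q : ℤ) * ((Finset.univ.filter fun i : ZMod q =>
      rep q (σ (i + 1) - i) < rep q (σ i - i)).card : ℤ)
      = (q : ℤ) * ((desNum q σ - 1 : ℕ) : ℤ) := by
    rw [hN]
    push_cast [Nat.cast_sub hdes1]
    ring
  have := mul_left_cancel₀ hq0 this
  exact_mod_cast this

end Conj

theorem type_realization_count_minimal' (q d s : ℕ) [NeZero q] (hq : 2 ≤ q)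
    (σ : Equiv.Perm (ZMod q)) (hσ : IsQCycle q σ) (hd : desNum q σ = d)
    (hd2 : 2 ≤ d) (hs : symOrder q σ = s) :
    {x : ZMod q → ℝ | ∃ j : ℕ,
      MkRealization q d (rotPerm q ^ j * σ * (rotPerm q ^ j)⁻¹) x}.ncard * s
      = d - 1 := by
  classical
  have hE : symOrder q σ = (Finset.univ.filter fun a : ZMod q => PhiC q σ a = σ).card := by
    rw [symOrder]
    apply Finset.card_bij (fun (j : ℕ) _ => ((j : ℕ) : ZMod q))
    · intro j hj
      rw [Finset.mem_filter] at hj ⊢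
      refine ⟨Finset.mem_univ _, ?_⟩
      rw [← conj_bridge]
      exact hj.2
    · intro j hj j' hj' h
      rw [Finset.mem_filter, Finset.mem_range] at hj hj'
      have h1 : ((j : ℕ) : ZMod q).val = ((j' : ℕ) : ZMod q).val := by rw [h]
      rwa [ZMod.val_cast_of_lt hj.1, ZMod.val_cast_of_lt hj'.1] at h1
    · intro a ha
      rw [Finset.mem_filter] at ha
      refine ⟨a.val, ?_, ZMod.natCast_rightInverse a⟩
      rw [Finset.mem_filter, Finset.mem_range]
      refine ⟨ZMod.val_lt a, ?_⟩
      rw [conj_bridge, ZMod.natCast_rightInverse a]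
      exact ha.2
  set Φ := PhiC q σ with hΦ
  set T := (Finset.univ.image Φ).filter (fun τ => (0 : ZMod q) ∈ desSet q τ) with hT
  have hfib : ∀ b : ZMod q, (Finset.univ.filter fun a => Φ a = Φ b).card = s := by
    intro b
    rw [← hs, hE]
    apply Finset.card_bij (fun a _ => a - b)
    · intro a ha
      rw [Finset.mem_filter] at ha ⊢
      exact ⟨Finset.mem_univ _, (PhiC_eq_iff σ a b).mp ha.2⟩
    · intro a _ a' _ h
      have := congrArg (· + b) h
      simpa using this
    · intro c hc
      rw [Finset.mem_filter] at hc
      refine ⟨c + b, ?_, add_sub_cancel_right c b⟩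
      rw [Finset.mem_filter]
      refine ⟨Finset.mem_univ _, ?_⟩
      apply (PhiC_eq_iff σ (c + b) b).mpr
      rw [add_sub_cancel_right]
      exact hc.2
  have hNT : (Finset.univ.filter fun a : ZMod q => (0 : ZMod q) ∈ desSet q (Φ a)).card
      = T.card * s := by
    rw [Finset.card_eq_sum_card_fiberwise (f := Φ) (t := T)
      (fun a ha => by
        rw [Finset.mem_coe, Finset.mem_filter] at ha
        rw [Finset.mem_coe, hT, Finset.mem_filter]
        exact ⟨Finset.mem_image_of_mem Φ (Finset.mem_univ a), ha.2⟩)]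
    rw [Finset.sum_congr rfl (fun τ hτ => ?_), Finset.sum_const, smul_eq_mul]
    rw [hT, Finset.mem_filter] at hτ
    obtain ⟨himg', hcond⟩ := hτ
    obtain ⟨b, _, rfl⟩ := Finset.mem_image.mp himg'
    have heq : (Finset.univ.filter fun a : ZMod q =>
        (0 : ZMod q) ∈ desSet q (Φ a)).filter (fun a => Φ a = Φ b)
        = Finset.univ.filter fun a => Φ a = Φ b := by
      ext a
      simp only [Finset.mem_filter, Finset.mem_univ, true_and]
      constructor
      · rintro ⟨_, h2⟩; exact h2
      · intro h2; exact ⟨h2 ▸ hcond, h2⟩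
    rw [heq, hfib b]
  have hSet : {x : ZMod q → ℝ | ∃ j : ℕ,
      MkRealization q d (rotPerm q ^ j * σ * (rotPerm q ^ j)⁻¹) x}
      = (fun τ => Xfun q d τ) '' (T : Set (Equiv.Perm (ZMod q))) := by
    ext x
    simp only [Set.mem_setOf_eq, Set.mem_image]
    constructor
    · rintro ⟨j, hreal⟩
      rw [conj_bridge] at hreal
      have hcyc' := PhiC_qcycle hσ ((j : ℕ) : ZMod q)
      have hdes' : desNum q (Φ ((j : ℕ) : ZMod q)) = d := by
        rw [hΦ, PhiC_des hq σ _, hd]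
      obtain ⟨h0, hxeq⟩ := Xuniq hq hd2 hcyc' hdes' hreal
      refine ⟨Φ ((j : ℕ) : ZMod q), ?_, hxeq.symm⟩
      rw [Finset.mem_coe, hT, Finset.mem_filter]
      exact ⟨Finset.mem_image_of_mem Φ (Finset.mem_univ _), h0⟩
    · rintro ⟨τ, hτ, rfl⟩
      rw [Finset.mem_coe, hT, Finset.mem_filter] at hτ
      obtain ⟨himg', h0⟩ := hτ
      obtain ⟨b, _, rfl⟩ := Finset.mem_image.mp himg'
      have hreal := Xreal hq hd2 (PhiC_qcycle hσ b)
        (by rw [PhiC_des hq σ b, hd]) h0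
      refine ⟨b.val, ?_⟩
      rw [conj_bridge, ZMod.natCast_rightInverse b]
      exact hreal
  have hinj : Set.InjOn (fun τ => Xfun q d τ) (T : Set (Equiv.Perm (ZMod q))) := by
    intro τ1 h1 τ2 h2 heq
    rw [Finset.mem_coe, hT, Finset.mem_filter] at h1 h2
    obtain ⟨himg1, h01⟩ := h1
    obtain ⟨himg2, h02⟩ := h2
    obtain ⟨b1, _, rfl⟩ := Finset.mem_image.mp himg1
    obtain ⟨b2, _, rfl⟩ := Finset.mem_image.mp himg2
    have hreal1 := Xreal hq hd2 (PhiC_qcycle hσ b1)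
      (by rw [PhiC_des hq σ b1, hd]) h01
    have hreal2 := Xreal hq hd2 (PhiC_qcycle hσ b2)
      (by rw [PhiC_des hq σ b2, hd]) h02
    simp only at heq
    rw [heq] at hreal1
    exact real_perm_unique hq hreal1 hreal2
  rw [hSet, Set.ncard_image_of_injOn hinj, Set.ncard_coe_finset, ← hNT, hΦ]
  have hres := Ncount hq hσ (by rw [hd]; omega)
  rw [hd] at hres
  exact hres

/-- A combinatorial type `τ = [σ]` in `𝒞_q` with `des τ = d ≥ 2` and
`sym τ = s` has exactly `(d-1)/s` realizations under `m_d` (stated as: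
`s` times the number of realizations equals `d - 1`). -/
theorem type_realization_count_minimal (q d s : ℕ) [NeZero q] (hq : 2 ≤ q)
    (σ : Equiv.Perm (ZMod q)) (hσ : IsQCycle q σ) (hd : desNum q σ = d)
    (hd2 : 2 ≤ d) (hs : symOrder q σ = s) :
    {x : ZMod q → ℝ | ∃ j : ℕ,
      MkRealization q d (rotPerm q ^ j * σ * (rotPerm q ^ j)⁻¹) x}.ncard * s
      = d - 1 :=
  type_realization_count_minimal' q d s hq σ hσ hd hd2 hs
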